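/- Define the operators C = (1/2) Σ_{⟨xy⟩} (−1)^x ( S¹_x S²_y − S²_x S¹_y ) (well defined on unordered nearest-neighbor pairs since the summand is invariant under swapping x and y, because (−1)^y = −(−1)^x), W = Σ_{x∈Λ} ( 1/2 + (−1)^x S³_x ), and H₀ = −Σ_{⟨xy⟩} ( S¹_x S¹_y + S²_x S²_y ). Then [C, W] = i·H₀. -/

import Mathlib

/-!
Common setup: the hard-core Bose lattice gas (XY model with staggered field) of
Aizenman–Lieb–Seiringer–Solovej–Yngvason on the torus `Λ = (ℤ/Lℤ)^d`.
The Hilbert space `⊗_{x∈Λ} ℂ²` is realized as matrices indexed by spin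
configurations `Λ → Bool` (with `true` = spin up), and the spin-1/2 operators
`Sⁱ_x` act as half the Pauli matrices on the factor at `x`.
-/

open scoped BigOperators
open Matrix MeasureTheory

noncomputable section

/-- Sites of the torus lattice `(ℤ/Lℤ)^d`. -/
abbrev Site (d L : ℕ) := Fin d → ZMod L

/-- Spin configurations: one two-level factor per site. -/
abbrev Cfg (d L : ℕ) := Site d L → Bool

/-- Operators on the `2^(L^d)`-dimensional Hilbert space `⊗_{x∈Λ} ℂ²`,
represented as matrices in the standard product basis. -/
abbrev Op (d L : ℕ) [NeZero L] := Matrix (Cfg d L) (Cfg d L) ℂ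

/-- Entries of the Pauli matrix σ¹ (basis label `true` = spin up). -/
def pauli1 (a b : Bool) : ℂ := if a = b then 0 else 1

/-- Entries of the Pauli matrix σ². -/
def pauli2 (a b : Bool) : ℂ := if a = b then 0 else if b then Complex.I else -Complex.I

/-- Entries of the Pauli matrix σ³. -/
def pauli3 (a b : Bool) : ℂ := if a = b then (if a then 1 else -1) else 0

variable (d L : ℕ) [NeZero L]

/-- The one-site spin operator `(1/2)·σ` acting at site `x` (identity on the other factors). -/
def spinOp (p : Bool → Bool → ℂ) (x : Site d L) : Op d L :=
  fun σ τ => if Function.update σ x (τ x) = τ then (1/2 : ℂ) * p (σ x) (τ x) else 0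

/-- `S¹_x`. -/
def S1 (x : Site d L) : Op d L := spinOp d L pauli1 x
/-- `S²_x`. -/
def S2 (x : Site d L) : Op d L := spinOp d L pauli2 x
/-- `S³_x`. -/
def S3 (x : Site d L) : Op d L := spinOp d L pauli3 x

/-- `S⁺_x = S¹_x + i S²_x`. -/
def Splus (x : Site d L) : Op d L := S1 d L x + Complex.I • S2 d L x
/-- `S⁻_x = S¹_x − i S²_x`. -/
def Sminus (x : Site d L) : Op d L := S1 d L x - Complex.I • S2 d L x

/-- The sign `(−1)^x = (−1)^{x₁+⋯+x_d}`. -/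
def stag (x : Site d L) : ℂ := (-1) ^ (∑ i, (x i).val)

/-- The unit lattice vector in direction `i`. -/
def eVec (i : Fin d) : Site d L := fun j => if j = i then 1 else 0

/-- The Hamiltonian of the hard-core lattice gas,
`H = −Σ_{⟨xy⟩}(S¹_xS¹_y + S²_xS²_y) + λ Σ_x (1/2 + (−1)^x S³_x)`,
the nearest-neighbor pairs `⟨xy⟩` being enumerated as `(x, x+eᵢ)`. -/
def ham (lam : ℝ) : Op d L :=
  -(∑ x : Site d L, ∑ i : Fin d,
      (S1 d L x * S1 d L (x + eVec d L i) + S2 d L x * S2 d L (x + eVec d L i)))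
  + (lam : ℂ) • ∑ x : Site d L, ((1/2 : ℂ) • (1 : Op d L) + stag d L x • S3 d L x)

/-- The Gibbs operator `e^{−βH}`. -/
def gibbs (lam β : ℝ) : Op d L := NormedSpace.exp ((-(β : ℂ)) • ham d L lam)

/-- Thermal expectation `⟨A⟩ = Tr(A e^{−βH})/Tr(e^{−βH})`. -/
def thermAvg (lam β : ℝ) (A : Op d L) : ℂ :=
  (A * gibbs d L lam β).trace / (gibbs d L lam β).trace

/-- The one-particle density matrix `γ(x,y) = ⟨S⁺_x S⁻_y⟩`. -/
def opdm (lam β : ℝ) (x y : Site d L) : ℂ :=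
  thermAvg d L lam β (Splus d L x * Sminus d L y)

/-- The total third spin component `S³_tot = Σ_x S³_x`. -/
def S3tot : Op d L := ∑ x : Site d L, S3 d L x

/-- The lowest eigenvalue `E_k` of `H` restricted to the sector `S³_tot = k`
(particle number `|Λ|/2 + k`): the least `μ` possessing a joint eigenvector. -/
def sectorEnergy (lam : ℝ) (k : ℤ) : ℝ :=
  sInf {μ : ℝ | ∃ ψ : Cfg d L → ℂ, ψ ≠ 0 ∧ (ham d L lam).mulVec ψ = (μ : ℂ) • ψ ∧
    (S3tot d L).mulVec ψ = (k : ℂ) • ψ}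

/-- The lowest eigenvalue of `H` (absolute ground state energy). -/
def groundEnergy (lam : ℝ) : ℝ :=
  sInf {μ : ℝ | ∃ ψ : Cfg d L → ℂ, ψ ≠ 0 ∧ (ham d L lam).mulVec ψ = (μ : ℂ) • ψ}

end

noncomputable section

/-- `C = (1/2) Σ_{⟨xy⟩} (−1)^x (S¹_x S²_y − S²_x S¹_y)` (pairs enumerated as `(x, x+eᵢ)`). -/
def Cop (d L : ℕ) [NeZero L] : Op d L :=
  (1/2 : ℂ) • ∑ x : Site d L, ∑ i : Fin d,
    stag d L x • (S1 d L x * S2 d L (x + eVec d L i) - S2 d L x * S1 d L (x + eVec d L i))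

/-- `W = Σ_x (1/2 + (−1)^x S³_x)`. -/
def Wop (d L : ℕ) [NeZero L] : Op d L :=
  ∑ x : Site d L, ((1/2 : ℂ) • (1 : Op d L) + stag d L x • S3 d L x)

/-- `H₀ = −Σ_{⟨xy⟩}(S¹_x S¹_y + S²_x S²_y)`. -/
def ham0 (d L : ℕ) [NeZero L] : Op d L :=
  -(∑ x : Site d L, ∑ i : Fin d,
      (S1 d L x * S1 d L (x + eVec d L i) + S2 d L x * S2 d L (x + eVec d L i)))

namespace CWaux

variable {d L : ℕ} [NeZero L]

/-- A single-site operator with entry function `f` at site `x`. -/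
def site (f : Bool → Bool → ℂ) (x : Site d L) : Op d L :=
  fun σ τ => if Function.update σ x (τ x) = τ then f (σ x) (τ x) else 0

lemma spinOp_eq_site (p : Bool → Bool → ℂ) (x : Site d L) :
    spinOp d L p x = site (fun a b => (1/2 : ℂ) * p a b) x := rfl

lemma sum_update (σ : Cfg d L) (x : Site d L) (G : Cfg d L → ℂ) :
    (∑ ρ : Cfg d L, if Function.update σ x (ρ x) = ρ then G ρ else 0)
      = ∑ b : Bool, G (Function.update σ x b) := by
  have h1 : ∀ ρ : Cfg d L,
      (if Function.update σ x (ρ x) = ρ then G ρ else 0)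
        = ∑ b : Bool, if Function.update σ x b = ρ then G ρ else 0 := by
    intro ρ
    refine (Finset.sum_eq_single (s := Finset.univ)
      (f := fun b => if Function.update σ x b = ρ then G ρ else 0) (ρ x) (fun b _ hb => ?_)
      (fun h => absurd (Finset.mem_univ _) h)).symm
    exact if_neg fun hc => hb (by rw [← hc, Function.update_self])
  simp_rw [h1]
  rw [Finset.sum_comm]
  simp

lemma site_mul_same (f g : Bool → Bool → ℂ) (x : Site d L) :
    site f x * site g x = site (fun a c => ∑ b : Bool, f a b * g b c) x := by
  ext σ τ
  rw [Matrix.mul_apply]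
  simp only [site, ite_mul, zero_mul]
  rw [sum_update σ x
    (fun ρ => f (σ x) (ρ x) * if Function.update ρ x (τ x) = τ then g (ρ x) (τ x) else 0)]
  simp only [Function.update_self, Function.update_idem]
  by_cases h : Function.update σ x (τ x) = τ
  · simp only [if_pos h]
  · simp only [if_neg h, mul_zero, Finset.sum_const_zero]

lemma site_mul_apply_ne {x y : Site d L} (h : x ≠ y) (f g : Bool → Bool → ℂ) (σ τ : Cfg d L) :
    (site f x * site g y) σ τ
      = if Function.update (Function.update σ x (τ x)) y (τ y) = τ
          then f (σ x) (τ x) * g (σ y) (τ y) else 0 := by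
  rw [Matrix.mul_apply]
  simp only [site, ite_mul, zero_mul]
  rw [sum_update σ x
    (fun ρ => f (σ x) (ρ x) * if Function.update ρ y (τ y) = τ then g (ρ y) (τ y) else 0)]
  simp only [Function.update_self, Function.update_of_ne (Ne.symm h)]
  refine (Finset.sum_eq_single (τ x) (fun b _ hb => ?_)
    (fun hmem => absurd (Finset.mem_univ _) hmem)).trans ?_
  · have hC : ¬ Function.update (Function.update σ x b) y (τ y) = τ := by
      intro hc
      apply hb
      have h2 := congrFun hc x
      rwa [Function.update_of_ne h, Function.update_self] at h2
    rw [if_neg hC, mul_zero]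
  · rw [mul_ite, mul_zero]

lemma site_comm {x y : Site d L} (h : x ≠ y) (f g : Bool → Bool → ℂ) :
    site f x * site g y = site g y * site f x := by
  ext σ τ
  rw [site_mul_apply_ne h, site_mul_apply_ne (Ne.symm h), Function.update_comm h]
  exact if_congr Iff.rfl (mul_comm _ _) rfl

lemma spin_commute (p q : Bool → Bool → ℂ) {x y : Site d L} (h : x ≠ y) :
    Commute (spinOp d L p x) (spinOp d L q y) := by
  show spinOp d L p x * spinOp d L q y = spinOp d L q y * spinOp d L p x
  rw [spinOp_eq_site p, spinOp_eq_site q]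
  exact site_comm h _ _

lemma smul_site (c : ℂ) (f : Bool → Bool → ℂ) (x : Site d L) :
    c • site f x = site (fun a b => c * f a b) x := by
  ext σ τ
  simp [site, mul_ite]

lemma comm_S1_S3 (x : Site d L) :
    S1 d L x * S3 d L x - S3 d L x * S1 d L x = (-Complex.I) • S2 d L x := by
  show spinOp d L pauli1 x * spinOp d L pauli3 x - spinOp d L pauli3 x * spinOp d L pauli1 x
      = (-Complex.I) • spinOp d L pauli2 x
  rw [spinOp_eq_site pauli1, spinOp_eq_site pauli3, spinOp_eq_site pauli2,
      site_mul_same, site_mul_same, smul_site]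
  ext σ τ
  simp only [site, Matrix.sub_apply]
  by_cases h : Function.update σ x (τ x) = τ
  · simp only [if_pos h]
    cases hσ : σ x <;> cases hτ : τ x <;>
      simp [pauli1, pauli2, pauli3, Fintype.sum_bool] <;> ring_nf <;>
      norm_num [Complex.I_sq]
  · simp [if_neg h]

lemma comm_S2_S3 (x : Site d L) :
    S2 d L x * S3 d L x - S3 d L x * S2 d L x = Complex.I • S1 d L x := by
  show spinOp d L pauli2 x * spinOp d L pauli3 x - spinOp d L pauli3 x * spinOp d L pauli2 x
      = Complex.I • spinOp d L pauli1 x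
  rw [spinOp_eq_site pauli2, spinOp_eq_site pauli3, spinOp_eq_site pauli1,
      site_mul_same, site_mul_same, smul_site]
  ext σ τ
  simp only [site, Matrix.sub_apply]
  by_cases h : Function.update σ x (τ x) = τ
  · simp only [if_pos h]
    cases hσ : σ x <;> cases hτ : τ x <;>
      simp [pauli1, pauli2, pauli3, Fintype.sum_bool] <;> ring_nf <;>
      norm_num [Complex.I_sq]
  · simp [if_neg h]

lemma aux1 {M : Type*} [Ring M] {a b c k : M} (h1 : a * c - c * a = k) (h2 : Commute c b) :
    (a * b) * c - c * (a * b) = k * b := by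
  have e : (a * b) * c - c * (a * b) = (a * c - c * a) * b := by
    rw [sub_mul, mul_assoc a b c, h2.symm.eq, ← mul_assoc a c b, mul_assoc c a b]
  rw [e, h1]

lemma aux2 {M : Type*} [Ring M] {a b c k : M} (h1 : b * c - c * b = k) (h2 : Commute c a) :
    (a * b) * c - c * (a * b) = a * k := by
  have e : (a * b) * c - c * (a * b) = a * (b * c - c * b) := by
    rw [mul_sub, mul_assoc a b c, ← mul_assoc c a b, h2.eq, mul_assoc a c b]
  rw [e, h1]

lemma commD_x {x y : Site d L} (hxy : x ≠ y) :
    (S1 d L x * S2 d L y - S2 d L x * S1 d L y) * S3 d L x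
      - S3 d L x * (S1 d L x * S2 d L y - S2 d L x * S1 d L y)
      = (-Complex.I) • (S1 d L x * S1 d L y + S2 d L x * S2 d L y) := by
  have c2y : Commute (S3 d L x) (S2 d L y) := spin_commute pauli3 pauli2 hxy
  have c1y : Commute (S3 d L x) (S1 d L y) := spin_commute pauli3 pauli1 hxy
  have e1 := aux1 (comm_S1_S3 x) c2y
  have e2 := aux1 (comm_S2_S3 x) c1y
  have split : (S1 d L x * S2 d L y - S2 d L x * S1 d L y) * S3 d L x
      - S3 d L x * (S1 d L x * S2 d L y - S2 d L x * S1 d L y)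
      = ((S1 d L x * S2 d L y) * S3 d L x - S3 d L x * (S1 d L x * S2 d L y))
        - ((S2 d L x * S1 d L y) * S3 d L x - S3 d L x * (S2 d L x * S1 d L y)) := by
    rw [sub_mul, mul_sub]; abel
  rw [split, e1, e2, smul_mul_assoc, smul_mul_assoc, smul_add]
  simp only [neg_smul]
  abel

lemma commD_y {x y : Site d L} (hxy : x ≠ y) :
    (S1 d L x * S2 d L y - S2 d L x * S1 d L y) * S3 d L y
      - S3 d L y * (S1 d L x * S2 d L y - S2 d L x * S1 d L y)
      = Complex.I • (S1 d L x * S1 d L y + S2 d L x * S2 d L y) := by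
  have c1x : Commute (S3 d L y) (S1 d L x) := spin_commute pauli3 pauli1 (Ne.symm hxy)
  have c2x : Commute (S3 d L y) (S2 d L x) := spin_commute pauli3 pauli2 (Ne.symm hxy)
  have e1 := aux2 (comm_S2_S3 y) c1x
  have e2 := aux2 (comm_S1_S3 y) c2x
  have split : (S1 d L x * S2 d L y - S2 d L x * S1 d L y) * S3 d L y
      - S3 d L y * (S1 d L x * S2 d L y - S2 d L x * S1 d L y)
      = ((S1 d L x * S2 d L y) * S3 d L y - S3 d L y * (S1 d L x * S2 d L y))
        - ((S2 d L x * S1 d L y) * S3 d L y - S3 d L y * (S2 d L x * S1 d L y)) := by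
    rw [sub_mul, mul_sub]; abel
  rw [split, e1, e2, mul_smul_comm, mul_smul_comm, smul_add]
  simp only [neg_smul, mul_smul_comm, sub_neg_eq_add]

lemma commD_zero {x y z : Site d L} (hzx : z ≠ x) (hzy : z ≠ y) :
    (S1 d L x * S2 d L y - S2 d L x * S1 d L y) * S3 d L z
      - S3 d L z * (S1 d L x * S2 d L y - S2 d L x * S1 d L y) = 0 := by
  have c1 : Commute (S3 d L z) (S1 d L x * S2 d L y) :=
    (spin_commute pauli3 pauli1 hzx).mul_right (spin_commute pauli3 pauli2 hzy)
  have c2 : Commute (S3 d L z) (S2 d L x * S1 d L y) :=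
    (spin_commute pauli3 pauli2 hzx).mul_right (spin_commute pauli3 pauli1 hzy)
  have c : Commute (S3 d L z) (S1 d L x * S2 d L y - S2 d L x * S1 d L y) := c1.sub_right c2
  rw [c.eq, sub_self]

lemma negOnePow_mod (hL : Even L) (m : ℕ) : ((-1 : ℂ)) ^ (m % L) = (-1) ^ m := by
  conv_rhs => rw [← Nat.mod_add_div m L]
  rw [pow_add, pow_mul, hL.neg_one_pow, one_pow, mul_one]

lemma stag_sq (x : Site d L) : stag d L x * stag d L x = 1 := by
  simp only [stag]
  rw [← pow_add]
  exact Even.neg_one_pow ⟨_, rfl⟩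

lemma stag_add_e [Fact (1 < L)] (hL : Even L) (x : Site d L) (i : Fin d) :
    stag d L (x + eVec d L i) = - stag d L x := by
  simp only [stag]
  rw [← Finset.add_sum_erase Finset.univ (fun j => ((x + eVec d L i) j).val)
        (Finset.mem_univ i),
      ← Finset.add_sum_erase Finset.univ (fun j => (x j).val) (Finset.mem_univ i)]
  have hrest : ∑ j ∈ Finset.univ.erase i, ((x + eVec d L i) j).val
      = ∑ j ∈ Finset.univ.erase i, (x j).val := by
    refine Finset.sum_congr rfl fun j hj => ?_
    have hji : j ≠ i := Finset.ne_of_mem_erase hj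
    simp [eVec, hji]
  have hxi : ((x + eVec d L i) i) = x i + 1 := by simp [eVec]
  rw [hrest, hxi, pow_add, pow_add]
  have h1 : ((-1 : ℂ)) ^ ((x i + 1).val) = -((-1) ^ (x i).val) := by
    rw [ZMod.val_add, ZMod.val_one, negOnePow_mod hL, pow_succ, mul_neg_one]
  rw [h1]
  ring

lemma keylemma {x y : Site d L} (hxy : x ≠ y) (hst : stag d L y = - stag d L x)
    (hsq : stag d L x * stag d L x = 1) :
    (stag d L x • (S1 d L x * S2 d L y - S2 d L x * S1 d L y)) * Wop d L
      - Wop d L * (stag d L x • (S1 d L x * S2 d L y - S2 d L x * S1 d L y))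
      = (-2 * Complex.I) • (S1 d L x * S1 d L y + S2 d L x * S2 d L y) := by
  have hAW : (S1 d L x * S2 d L y - S2 d L x * S1 d L y) * Wop d L
      - Wop d L * (S1 d L x * S2 d L y - S2 d L x * S1 d L y)
      = (-2 * Complex.I * stag d L x) • (S1 d L x * S1 d L y + S2 d L x * S2 d L y) := by
    have hterm : ∀ z : Site d L,
        (S1 d L x * S2 d L y - S2 d L x * S1 d L y)
            * ((1/2 : ℂ) • (1 : Op d L) + stag d L z • S3 d L z)
          - ((1/2 : ℂ) • (1 : Op d L) + stag d L z • S3 d L z)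
            * (S1 d L x * S2 d L y - S2 d L x * S1 d L y)
          = stag d L z • ((S1 d L x * S2 d L y - S2 d L x * S1 d L y) * S3 d L z
              - S3 d L z * (S1 d L x * S2 d L y - S2 d L x * S1 d L y)) := by
      intro z
      simp only [mul_add, add_mul, mul_smul_comm, smul_mul_assoc, mul_one, one_mul, smul_sub]
      abel
    have hvan : ∀ z ∈ (Finset.univ : Finset (Site d L)),
        z ∉ ({x, y} : Finset (Site d L)) →
        stag d L z • ((S1 d L x * S2 d L y - S2 d L x * S1 d L y) * S3 d L z
            - S3 d L z * (S1 d L x * S2 d L y - S2 d L x * S1 d L y)) = 0 := by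
      intro z _ hz
      simp only [Finset.mem_insert, Finset.mem_singleton, not_or] at hz
      rw [commD_zero hz.1 hz.2, smul_zero]
    simp only [Wop]
    rw [Finset.mul_sum, Finset.sum_mul, ← Finset.sum_sub_distrib]
    rw [Finset.sum_congr rfl fun z _ => hterm z]
    rw [← Finset.sum_subset (Finset.subset_univ ({x, y} : Finset (Site d L))) hvan]
    rw [Finset.sum_pair hxy, commD_x hxy, commD_y hxy, hst, smul_smul, smul_smul, ← add_smul]
    congr 1
    ring
  rw [smul_mul_assoc, mul_smul_comm, ← smul_sub, hAW, smul_smul]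
  congr 1
  linear_combination (-2 * Complex.I) * hsq

end CWaux

/-- The commutator identity `[C, W] = i·H₀`. -/
theorem commutator_CW (d L : ℕ) [NeZero L] (hd : 1 ≤ d) (hL : Even L) (hL2 : 2 ≤ L) :
    Cop d L * Wop d L - Wop d L * Cop d L = Complex.I • ham0 d L := by
  haveI : Fact (1 < L) := ⟨hL2⟩
  have hxy : ∀ (x : Site d L) (i : Fin d), x ≠ x + eVec d L i := by
    intro x i h
    have h2 := congrFun h i
    simp [eVec, left_eq_add] at h2
  have hstag : ∀ (x : Site d L) (i : Fin d), stag d L (x + eVec d L i) = - stag d L x :=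
    fun x i => CWaux.stag_add_e hL x i
  have step : (∑ x : Site d L, ∑ i : Fin d,
        stag d L x • (S1 d L x * S2 d L (x + eVec d L i)
          - S2 d L x * S1 d L (x + eVec d L i))) * Wop d L
      - Wop d L * (∑ x : Site d L, ∑ i : Fin d,
        stag d L x • (S1 d L x * S2 d L (x + eVec d L i)
          - S2 d L x * S1 d L (x + eVec d L i)))
      = ∑ x : Site d L, ∑ i : Fin d, (-2 * Complex.I) •
          (S1 d L x * S1 d L (x + eVec d L i) + S2 d L x * S2 d L (x + eVec d L i)) := by
    rw [Finset.sum_mul, Finset.mul_sum, ← Finset.sum_sub_distrib]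
    refine Finset.sum_congr rfl fun x _ => ?_
    rw [Finset.sum_mul, Finset.mul_sum, ← Finset.sum_sub_distrib]
    exact Finset.sum_congr rfl fun i _ =>
      CWaux.keylemma (hxy x i) (hstag x i) (CWaux.stag_sq x)
  simp only [Cop, ham0]
  rw [smul_mul_assoc, mul_smul_comm, ← smul_sub, step]
  simp only [← Finset.smul_sum]
  rw [smul_smul, smul_neg, ← neg_smul]
  congr 1
  ring

end
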